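/- Let H be a real inner product space, Λ : H → H a continuous linear self-adjoint operator with ⟨Λx, x⟩ ≥ 0 for all x, η ∈ ℝ, a₂ ∈ ℝ with η + a₂ ≥ 0, and F : H → H satisfying ⟨a − b, F(a) − F(b)⟩ ≥ a₂‖a − b‖² for all a, b ∈ H. Suppose u, v, ũ, ṽ : ℝ → H are differentiable and satisfy, for all t ≥ 0, u'(t) = v(t), v'(t) = −Λu(t) − η v(t) − F(v(t)) + w(t) and ũ'(t) = ṽ(t), ṽ'(t) = −Λũ(t) − η ṽ(t) − F(ṽ(t)) + w(t) with the same forcing w : ℝ → H. Then for every t ≥ 0, ⟨Λ(u(t) − ũ(t)), u(t) − ũ(t)⟩ + ‖v(t) − ṽ(t)‖² ≤ ⟨Λ(u(0) − ũ(0)), u(0) − ũ(0)⟩ + ‖v(0) − ṽ(0)‖². -/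

import Mathlib

open scoped RealInnerProductSpace

theorem stmt5 {H : Type*} [NormedAddCommGroup H] [InnerProductSpace ℝ H]
    (Λ : H →L[ℝ] H) (hΛsym : ∀ x y : H, ⟪Λ x, y⟫ = ⟪x, Λ y⟫)
    (hΛpos : ∀ x : H, 0 ≤ ⟪Λ x, x⟫)
    (η a₂ : ℝ) (hηa : 0 ≤ η + a₂)
    (F : H → H) (hF : ∀ a b : H, a₂ * ‖a - b‖ ^ 2 ≤ ⟪a - b, F a - F b⟫)
    (w u₁ v₁ u₂ v₂ : ℝ → H)
    (hu₁ : Differentiable ℝ u₁) (hv₁ : Differentiable ℝ v₁)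
    (hu₂ : Differentiable ℝ u₂) (hv₂ : Differentiable ℝ v₂)
    (hu₁' : ∀ t : ℝ, 0 ≤ t → deriv u₁ t = v₁ t)
    (hv₁' : ∀ t : ℝ, 0 ≤ t → deriv v₁ t = -Λ (u₁ t) - η • v₁ t - F (v₁ t) + w t)
    (hu₂' : ∀ t : ℝ, 0 ≤ t → deriv u₂ t = v₂ t)
    (hv₂' : ∀ t : ℝ, 0 ≤ t → deriv v₂ t = -Λ (u₂ t) - η • v₂ t - F (v₂ t) + w t)
    (t : ℝ) (ht : 0 ≤ t) :
    ⟪Λ (u₁ t - u₂ t), u₁ t - u₂ t⟫ + ‖v₁ t - v₂ t‖ ^ 2 ≤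
      ⟪Λ (u₁ 0 - u₂ 0), u₁ 0 - u₂ 0⟫ + ‖v₁ 0 - v₂ 0‖ ^ 2 := by
  set ub : ℝ → H := fun s => u₁ s - u₂ s with hub
  set vb : ℝ → H := fun s => v₁ s - v₂ s with hvb
  have hubd : Differentiable ℝ ub := hu₁.sub hu₂
  have hvbd : Differentiable ℝ vb := hv₁.sub hv₂
  have hub' : ∀ s : ℝ, 0 ≤ s → HasDerivAt ub (vb s) s := by
    intro s hs
    have h1 : deriv ub s = vb s := by
      rw [hub, deriv_fun_sub (hu₁ s) (hu₂ s), hu₁' s hs, hu₂' s hs]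
    exact h1 ▸ (hubd s).hasDerivAt
  have hvb' : ∀ s : ℝ, 0 ≤ s →
      HasDerivAt vb (-Λ (ub s) - η • vb s - (F (v₁ s) - F (v₂ s))) s := by
    intro s hs
    have h1 : deriv vb s = -Λ (ub s) - η • vb s - (F (v₁ s) - F (v₂ s)) := by
      rw [hvb, deriv_fun_sub (hv₁ s) (hv₂ s), hv₁' s hs, hv₂' s hs]
      simp only [hub, hvb, map_sub, smul_sub]
      abel
    exact h1 ▸ (hvbd s).hasDerivAt
  set f : ℝ → ℝ := fun s => ⟪Λ (ub s), ub s⟫ + ⟪vb s, vb s⟫ with hf'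
  have key : f t ≤ f 0 := by
    rcases eq_or_lt_of_le ht with h | h
    · rw [← h]
    have hdf : ∀ s : ℝ, 0 ≤ s → HasDerivAt f
        ((⟪Λ (ub s), vb s⟫ + ⟪Λ (vb s), ub s⟫) +
          (⟪vb s, -Λ (ub s) - η • vb s - (F (v₁ s) - F (v₂ s))⟫ +
           ⟪-Λ (ub s) - η • vb s - (F (v₁ s) - F (v₂ s)), vb s⟫)) s := by
      intro s hs
      have hΛub : HasDerivAt (fun s => Λ (ub s)) (Λ (vb s)) s :=
        Λ.hasFDerivAt.comp_hasDerivAt s (hub' s hs)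
      exact (hΛub.inner ℝ (hub' s hs)).add ((hvb' s hs).inner ℝ (hvb' s hs))
    have hderiv_nonpos : ∀ s ∈ Set.Ioo (0:ℝ) t, deriv f s ≤ 0 := by
      intro s hs
      rw [(hdf s hs.1.le).deriv]
      have hsym : ⟪Λ (vb s), ub s⟫ = ⟪Λ (ub s), vb s⟫ := by
        rw [hΛsym, real_inner_comm]
      have hFb : a₂ * ‖vb s‖ ^ 2 ≤ ⟪vb s, F (v₁ s) - F (v₂ s)⟫ := hF (v₁ s) (v₂ s)
      have hinner : ⟪vb s, Λ (ub s)⟫ = ⟪Λ (ub s), vb s⟫ := real_inner_comm _ _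
      simp only [inner_sub_right, inner_sub_left, inner_neg_right, inner_neg_left,
        real_inner_smul_right, real_inner_smul_left, hsym, hinner,
        real_inner_self_eq_norm_sq]
      rw [inner_sub_right] at hFb
      nlinarith [mul_nonneg hηa (sq_nonneg ‖vb s‖), real_inner_comm (F (v₁ s)) (vb s),
        real_inner_comm (F (v₂ s)) (vb s)]
    have hanti : AntitoneOn f (Set.Icc 0 t) := by
      apply antitoneOn_of_deriv_nonpos (convex_Icc 0 t)
      · exact (((Λ.differentiable.comp hubd)).inner ℝ hubd |>.add (hvbd.inner ℝ hvbd)).continuous.continuousOn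
      · intro s hs
        exact ((((Λ.differentiable.comp hubd)).inner ℝ hubd |>.add (hvbd.inner ℝ hvbd)) s).differentiableWithinAt
      · intro s hs
        rw [interior_Icc] at hs
        exact hderiv_nonpos s hs
    exact hanti (Set.left_mem_Icc.mpr ht) (Set.mem_Icc.mpr ⟨le_refl 0, ht⟩ |>.imp id (fun _ => le_refl t) |> fun _ => ⟨ht, le_refl t⟩) ht
  simp only [hf', hub, hvb, real_inner_self_eq_norm_sq] at key
  simpa [map_sub] using key
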